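/- arXiv:2211.08869 — 3 statements merged into one kernel-verified Lean document; each statement's English description precedes it below -/
import Mathlib

section
/- Let G be a group containing a normal, non-abelian maximal subgroup M with Z(G) properly contained in Z(M). Suppose that G contains maximal subgroups K and L such that K ∩ M = Z(M), Z(M) is not contained in L, and L is not normal in G. Then every element of K \ Z(M) lies in some G-conjugate of L. -/
open Subgroup
open Pointwise

namespace NC

variable {G : Type*} [Group G]

/-- The centre of a subgroup `H`, realised as a subgroup of the ambient group `G`. -/
def centerOf (H : Subgroup G) : Subgroup G := H ⊓ Subgroup.centralizer (H : Set G)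

/-- `H` is a maximal subgroup of `K` (both subgroups of the ambient group `G`). -/
def IsMaximalIn (H K : Subgroup G) : Prop :=
  H < K ∧ ∀ T : Subgroup G, H < T → T ≤ K → T = K

/-- The non-commuting, non-generating graph of `G`: vertices `x, y` are adjacent
iff they do not commute and do not generate `G`.  (Central elements are isolated
vertices here; the paper simply removes them from the vertex set.) -/
def ncGraph (G : Type*) [Group G] : SimpleGraph G where
  Adj x y := x * y ≠ y * x ∧ Subgroup.closure {x, y} ≠ ⊤
  symm := by
    constructor
    intro x y h
    exact ⟨fun e => h.1 e.symm, by rw [Set.pair_comm]; exact h.2⟩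
  loopless := by
    constructor
    intro x h
    exact h.1 rfl

/-- The conjugate `g H g⁻¹` of a subgroup `H` by an element `g`. -/
def conjSub (g : G) (H : Subgroup G) : Subgroup G := H.map (MulAut.conj g).toMonoidHom

/-- "The quotient of `G` by the subgroup `H` is cyclic": every coset of `H` is a
power of a fixed coset.  For `H` normal this says exactly that `G/H` is cyclic. -/
def QuotCyclic (H : Subgroup G) : Prop := ∃ g : G, ∀ x : G, ∃ n : ℤ, x⁻¹ * g ^ n ∈ H

/-- `P` is a Sylow `p`-subgroup of `G`. -/
def IsSylowIn (p : ℕ) (P : Subgroup G) : Prop :=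
  IsPGroup p P ∧ ∀ R : Subgroup G, IsPGroup p R → P ≤ R → R = P

/-- The Frattini subgroup of a subgroup `P` (the intersection of the maximal
subgroups of `P`), realised as a subgroup of the ambient group. -/
def phiIn (P : Subgroup G) : Subgroup G := P ⊓ sInf {W : Subgroup G | IsMaximalIn W P}

/-- `G` has exactly two conjugacy classes of maximal subgroups. -/
def TwoMaxClasses (G : Type*) [Group G] : Prop :=
  ∃ K L : Subgroup G, IsCoatom K ∧ IsCoatom L ∧ (∀ g : G, conjSub g K ≠ L) ∧
    ∀ T : Subgroup G, IsCoatom T → (∃ g : G, T = conjSub g K) ∨ (∃ g : G, T = conjSub g L)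

/-- The induced subgraph of the non-commuting, non-generating graph on the
actual vertex set `G \ Z(G)`. -/
def ncSubgraph (G : Type*) [Group G] := (ncGraph G).induce {x : G | x ∉ Subgroup.center G}

variable {M : Subgroup G}
theorem centerOf_le (M : Subgroup G) : centerOf M ≤ M := inf_le_left
theorem centerOf_comm {x y : G} (hx : x ∈ centerOf M) (hy : y ∈ centerOf M) :
    x * y = y * x :=
  ((Subgroup.mem_centralizer_iff.mp (Subgroup.mem_inf.mp hx).2) y (Subgroup.mem_inf.mp hy).1).symm
theorem centerOf_normal (hMn : M.Normal) : (centerOf M).Normal := by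
  constructor
  intro z hz g
  obtain ⟨hzM, hzc⟩ := Subgroup.mem_inf.mp hz
  refine Subgroup.mem_inf.mpr ⟨hMn.conj_mem z hzM g, Subgroup.mem_centralizer_iff.mpr ?_⟩
  intro m hm
  have hm' : g⁻¹ * m * g ∈ M := by simpa using hMn.conj_mem m hm g⁻¹
  have h := Subgroup.mem_centralizer_iff.mp hzc _ hm'
  calc m * (g * z * g⁻¹) = g * ((g⁻¹ * m * g) * z) * g⁻¹ := by group
    _ = g * (z * (g⁻¹ * m * g)) * g⁻¹ := by rw [h]
    _ = (g * z * g⁻¹) * m := by group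
def Ssub (hMn : M.Normal) (L : Subgroup G) (k : G) : Subgroup G where
  carrier := {x | ∃ z ∈ centerOf M, ∃ n ∈ centerOf M ⊓ L, x = z * (k * z⁻¹ * k⁻¹) * n}
  one_mem' := ⟨1, one_mem _, 1, one_mem _, by group⟩
  mul_mem' := by
    rintro a b ⟨z₁, hz₁, n₁, hn₁, rfl⟩ ⟨z₂, hz₂, n₂, hn₂, rfl⟩
    refine ⟨z₁ * z₂, mul_mem hz₁ hz₂, n₁ * n₂, mul_mem hn₁ hn₂, ?_⟩
    have hw₁ : k * z₁⁻¹ * k⁻¹ ∈ centerOf M := (centerOf_normal hMn).conj_mem z₁⁻¹ (inv_mem hz₁) k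
    have hw₂ : k * z₂⁻¹ * k⁻¹ ∈ centerOf M := (centerOf_normal hMn).conj_mem z₂⁻¹ (inv_mem hz₂) k
    have hn₁Z : n₁ ∈ centerOf M := (Subgroup.mem_inf.mp hn₁).1
    calc z₁ * (k * z₁⁻¹ * k⁻¹) * n₁ * (z₂ * (k * z₂⁻¹ * k⁻¹) * n₂)
        = z₁ * (k * z₁⁻¹ * k⁻¹) * (n₁ * (z₂ * (k * z₂⁻¹ * k⁻¹))) * n₂ := by group
      _ = z₁ * (k * z₁⁻¹ * k⁻¹) * ((z₂ * (k * z₂⁻¹ * k⁻¹)) * n₁) * n₂ := by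
            rw [centerOf_comm hn₁Z (mul_mem hz₂ hw₂)]
      _ = z₁ * ((k * z₁⁻¹ * k⁻¹) * z₂) * ((k * z₂⁻¹ * k⁻¹) * (n₁ * n₂)) := by group
      _ = z₁ * (z₂ * (k * z₁⁻¹ * k⁻¹)) * ((k * z₂⁻¹ * k⁻¹) * (n₁ * n₂)) := by
            rw [centerOf_comm hw₁ hz₂]
      _ = (z₁ * z₂) * ((k * z₁⁻¹ * k⁻¹) * (k * z₂⁻¹ * k⁻¹)) * (n₁ * n₂) := by group
      _ = (z₁ * z₂) * ((k * z₂⁻¹ * k⁻¹) * (k * z₁⁻¹ * k⁻¹)) * (n₁ * n₂) := by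
            rw [centerOf_comm hw₁ hw₂]
      _ = (z₁ * z₂) * (k * (z₁ * z₂)⁻¹ * k⁻¹) * (n₁ * n₂) := by group
  inv_mem' := by
    rintro a ⟨z, hz, n, hn, rfl⟩
    refine ⟨z⁻¹, inv_mem hz, n⁻¹, inv_mem hn, ?_⟩
    have hw : k * z * k⁻¹ ∈ centerOf M := (centerOf_normal hMn).conj_mem z hz k
    have hnZ : n ∈ centerOf M := (Subgroup.mem_inf.mp hn).1
    calc (z * (k * z⁻¹ * k⁻¹) * n)⁻¹ = n⁻¹ * ((k * z * k⁻¹) * z⁻¹) := by group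
      _ = n⁻¹ * (z⁻¹ * (k * z * k⁻¹)) := by rw [centerOf_comm hw (inv_mem hz)]
      _ = (z⁻¹ * (k * z * k⁻¹)) * n⁻¹ := by
            rw [centerOf_comm (inv_mem hnZ) (mul_mem (inv_mem hz) hw)]
      _ = z⁻¹ * (k * (z⁻¹)⁻¹ * k⁻¹) * n⁻¹ := by group
theorem mem_Ssub {hMn : M.Normal} {L : Subgroup G} {k x : G} :
    x ∈ Ssub hMn L k ↔ ∃ z ∈ centerOf M, ∃ n ∈ centerOf M ⊓ L, x = z * (k * z⁻¹ * k⁻¹) * n :=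
  Iff.rfl

/-- Lemma 4.8(iii) / `lem:primgpint`. -/
theorem statement_16 {M : Subgroup G} (hM : IsCoatom M) (hMn : M.Normal)
    (hMna : ∃ a ∈ M, ∃ b ∈ M, a * b ≠ b * a)
    (hZ : Subgroup.center G < centerOf M)
    {K L : Subgroup G} (hK : IsCoatom K) (hL : IsCoatom L)
    (hKM : K ⊓ M = centerOf M) (hZL : ¬ centerOf M ≤ L) (hLn : ¬ L.Normal) :
    ∀ k ∈ K, k ∉ centerOf M → ∃ g : G, k ∈ conjSub g L := by
  intro k hkK hkZ
  have hZN : (centerOf M).Normal := centerOf_normal hMn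
  -- k ∉ M
  have hkM : k ∉ M := fun h => hkZ (hKM ▸ Subgroup.mem_inf.mpr ⟨hkK, h⟩)
  -- ⟨M, k⟩ = G
  have htop : M ⊔ Subgroup.closure {k} = ⊤ := by
    refine hM.2 _ (lt_of_le_of_ne le_sup_left fun h => hkM ?_)
    rw [h]
    exact Subgroup.mem_sup_right (Subgroup.subset_closure rfl)
  -- every g acts on Z(M) as a power of k
  have hact : ∀ g : G, ∃ j : ℤ, ∀ z ∈ centerOf M, g * z * g⁻¹ = k ^ j * z * k ^ (-j) := by
    intro g
    have hg : g ∈ Subgroup.closure ((M : Set G) ∪ {k}) := by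
      rw [Subgroup.closure_union, Subgroup.closure_eq, htop]
      exact Subgroup.mem_top g
    induction hg using Subgroup.closure_induction with
    | mem x hx =>
      rcases hx with hx | hx
      · refine ⟨0, fun z hz => ?_⟩
        have hc : x * z = z * x := Subgroup.mem_centralizer_iff.mp (Subgroup.mem_inf.mp hz).2 x hx
        rw [hc]; group
      · rw [Set.mem_singleton_iff] at hx
        subst hx
        exact ⟨1, fun z hz => by group⟩
    | one => exact ⟨0, fun z hz => by group⟩
    | mul x y hx hy ihx ihy =>
      obtain ⟨i, hi⟩ := ihx
      obtain ⟨j, hj⟩ := ihy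
      refine ⟨i + j, fun z hz => ?_⟩
      have hzy : y * z * y⁻¹ ∈ centerOf M := hZN.conj_mem z hz y
      calc x * y * z * (x * y)⁻¹ = x * (y * z * y⁻¹) * x⁻¹ := by group
        _ = k ^ i * (y * z * y⁻¹) * k ^ (-i) := hi _ hzy
        _ = k ^ i * (k ^ j * z * k ^ (-j)) * k ^ (-i) := by rw [hj z hz]
        _ = k ^ (i + j) * z * k ^ (-(i + j)) := by group
    | inv x hx ihx =>
      obtain ⟨j, hj⟩ := ihx
      refine ⟨-j, fun z hz => ?_⟩
      have hz' : (k ^ j)⁻¹ * z * k ^ j ∈ centerOf M := by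
        simpa using hZN.conj_mem z hz (k ^ j)⁻¹
      have h1 : x * ((k ^ j)⁻¹ * z * k ^ j) * x⁻¹ = z := by
        rw [hj _ hz']; group
      calc x⁻¹ * z * x⁻¹⁻¹ = x⁻¹ * (x * ((k ^ j)⁻¹ * z * k ^ j) * x⁻¹) * x⁻¹⁻¹ := by rw [h1]
        _ = k ^ (-j) * z * k ^ (-(-j)) := by group
  -- Z ⊔ L = ⊤, product decomposition
  have hZLtop : centerOf M ⊔ L = ⊤ :=
    hL.2 _ (lt_of_le_of_ne le_sup_right fun h => hZL (le_sup_left.trans h.symm.le))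
  haveI : (centerOf M).Normal := hZN
  have GZL : ∀ g : G, ∃ z ∈ centerOf M, ∃ l ∈ L, g = z * l := by
    intro g
    have hg : g ∈ ((centerOf M ⊔ L : Subgroup G) : Set G) := by
      rw [hZLtop]; simp
    rw [Subgroup.normal_mul] at hg
    obtain ⟨z, hz, l, hl, h⟩ := hg
    exact ⟨z, hz, l, hl, h.symm⟩
  -- N = Z ⊓ L is normal
  have hNnorm : ∀ (g n : G), n ∈ centerOf M ⊓ L → g * n * g⁻¹ ∈ centerOf M ⊓ L := by
    intro g n hn
    obtain ⟨z, hz, l, hl, rfl⟩ := GZL g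
    obtain ⟨hnZ, hnL⟩ := Subgroup.mem_inf.mp hn
    have h1 : l * n * l⁻¹ ∈ centerOf M ⊓ L :=
      Subgroup.mem_inf.mpr ⟨hZN.conj_mem n hnZ l, mul_mem (mul_mem hl hnL) (inv_mem hl)⟩
    have h2 : l * n * l⁻¹ ∈ centerOf M := (Subgroup.mem_inf.mp h1).1
    have heq : z * l * n * (z * l)⁻¹ = l * n * l⁻¹ := by
      calc z * l * n * (z * l)⁻¹ = z * (l * n * l⁻¹) * z⁻¹ := by group
        _ = (l * n * l⁻¹) * z * z⁻¹ := by rw [centerOf_comm hz h2]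
        _ = l * n * l⁻¹ := by group
    rw [heq]; exact h1
  -- S facts
  have hSZ : ∀ s ∈ Ssub hMn L k, s ∈ centerOf M := by
    intro s hs
    rw [mem_Ssub] at hs
    obtain ⟨z, hz, n, hn, rfl⟩ := hs
    exact mul_mem (mul_mem hz (hZN.conj_mem _ (inv_mem hz) k)) (Subgroup.mem_inf.mp hn).1
  have hSconjL : ∀ l' ∈ L, ∀ s ∈ Ssub hMn L k, l' * s * l'⁻¹ ∈ Ssub hMn L k := by
    intro l' hl' s hs
    rw [mem_Ssub] at hs
    obtain ⟨z, hz, n, hn, rfl⟩ := hs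
    obtain ⟨j, hj⟩ := hact l'
    have hcz : z * (k * z⁻¹ * k⁻¹) ∈ centerOf M := mul_mem hz (hZN.conj_mem _ (inv_mem hz) k)
    have hz' : k ^ j * z * k ^ (-j) ∈ centerOf M := by
      have := hZN.conj_mem z hz (k ^ j)
      rwa [← zpow_neg] at this
    rw [mem_Ssub]
    refine ⟨k ^ j * z * k ^ (-j), hz', l' * n * l'⁻¹, hNnorm l' n hn, ?_⟩
    have h1 : l' * (z * (k * z⁻¹ * k⁻¹)) * l'⁻¹ = k ^ j * (z * (k * z⁻¹ * k⁻¹)) * k ^ (-j) :=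
      hj _ hcz
    calc l' * (z * (k * z⁻¹ * k⁻¹) * n) * l'⁻¹
        = (l' * (z * (k * z⁻¹ * k⁻¹)) * l'⁻¹) * (l' * n * l'⁻¹) := by group
      _ = (k ^ j * (z * (k * z⁻¹ * k⁻¹)) * k ^ (-j)) * (l' * n * l'⁻¹) := by rw [h1]
      _ = (k ^ j * z * k ^ (-j)) * (k * (k ^ j * z * k ^ (-j))⁻¹ * k⁻¹) * (l' * n * l'⁻¹) := by
            group
  have hSnorm : ∀ (g s : G), s ∈ Ssub hMn L k → g * s * g⁻¹ ∈ Ssub hMn L k := by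
    intro g s hs
    obtain ⟨z₀, hz₀, l', hl', rfl⟩ := GZL g
    have h1 : l' * s * l'⁻¹ ∈ Ssub hMn L k := hSconjL l' hl' s hs
    have h1Z : l' * s * l'⁻¹ ∈ centerOf M := hSZ _ h1
    have heq : z₀ * l' * s * (z₀ * l')⁻¹ = l' * s * l'⁻¹ := by
      calc z₀ * l' * s * (z₀ * l')⁻¹ = z₀ * (l' * s * l'⁻¹) * z₀⁻¹ := by group
        _ = (l' * s * l'⁻¹) * z₀ * z₀⁻¹ := by rw [centerOf_comm hz₀ h1Z]
        _ = l' * s * l'⁻¹ := by group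
    rw [heq]; exact h1
  by_cases hSL : Ssub hMn L k ≤ L
  · -- contradiction branch
    exfalso
    have hcN : ∀ z ∈ centerOf M, z * (k * z⁻¹ * k⁻¹) ∈ centerOf M ⊓ L := by
      intro z hz
      have hczZ : z * (k * z⁻¹ * k⁻¹) ∈ centerOf M :=
        mul_mem hz (hZN.conj_mem _ (inv_mem hz) k)
      have hmem : z * (k * z⁻¹ * k⁻¹) ∈ Ssub hMn L k := by
        rw [mem_Ssub]; exact ⟨z, hz, 1, one_mem _, (mul_one _).symm⟩
      exact Subgroup.mem_inf.mpr ⟨hczZ, hSL hmem⟩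
    have hcjN : ∀ j : ℤ, ∀ z ∈ centerOf M, z * (k ^ j * z⁻¹ * k ^ (-j)) ∈ centerOf M ⊓ L := by
      intro j
      induction j using Int.induction_on with
      | zero =>
        intro z hz
        have h0 : z * (k ^ (0 : ℤ) * z⁻¹ * k ^ (-(0 : ℤ))) = 1 := by group
        rw [h0]; exact one_mem _
      | succ i ih =>
        intro z hz
        have h1 : z * (k ^ ((i : ℤ) + 1) * z⁻¹ * k ^ (-((i : ℤ) + 1))) =
            (z * (k ^ (i : ℤ) * z⁻¹ * k ^ (-(i : ℤ)))) *
              (k ^ (i : ℤ) * (z * (k * z⁻¹ * k⁻¹)) * k ^ (-(i : ℤ))) := by group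
        rw [h1]
        refine mul_mem (ih z hz) ?_
        have h2 := hNnorm (k ^ (i : ℤ)) _ (hcN z hz)
        rwa [← zpow_neg] at h2
      | pred i ih =>
        intro z hz
        have hc1 : z * (k⁻¹ * z⁻¹ * k) ∈ centerOf M ⊓ L := by
          have h0 : z * (k⁻¹ * z⁻¹ * k) = k⁻¹ * (z * (k * z⁻¹ * k⁻¹))⁻¹ * k := by group
          rw [h0]
          have h2 := hNnorm k⁻¹ _ (inv_mem (hcN z hz))
          simpa using h2
        have h1 : z * (k ^ (-(i : ℤ) - 1) * z⁻¹ * k ^ (-(-(i : ℤ) - 1))) =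
            (z * (k ^ (-(i : ℤ)) * z⁻¹ * k ^ (-(-(i : ℤ))))) *
              (k ^ (-(i : ℤ)) * (z * (k⁻¹ * z⁻¹ * k)) * k ^ (-(-(i : ℤ)))) := by group
        rw [h1]
        refine mul_mem (ih z hz) ?_
        have h2 := hNnorm (k ^ (-(i : ℤ))) _ hc1
        rwa [← zpow_neg] at h2
    have hZnormL : ∀ z ∈ centerOf M, ∀ l' ∈ L, z * l' * z⁻¹ ∈ L := by
      intro z hz l' hl'
      obtain ⟨j, hj⟩ := hact l'
      have h1 : l' * z⁻¹ * l'⁻¹ = k ^ j * z⁻¹ * k ^ (-j) := hj z⁻¹ (inv_mem hz)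
      have h2 : z * l' * z⁻¹ = (z * (k ^ j * z⁻¹ * k ^ (-j))) * l' := by
        calc z * l' * z⁻¹ = z * (l' * z⁻¹ * l'⁻¹) * l' := by group
          _ = z * (k ^ j * z⁻¹ * k ^ (-j)) * l' := by rw [h1]
      rw [h2]
      exact mul_mem (Subgroup.mem_inf.mp (hcjN j z hz)).2 hl'
    have hZnormalizer : centerOf M ≤ Subgroup.normalizer (L : Set G) := by
      intro z hz
      rw [Subgroup.mem_normalizer_iff]
      intro h
      constructor
      · intro hh; exact hZnormL z hz h hh
      · intro hh
        have h3 := hZnormL z⁻¹ (inv_mem hz) _ hh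
        have heq : z⁻¹ * (z * h * z⁻¹) * z⁻¹⁻¹ = h := by group
        rwa [heq] at h3
    have hNL : Subgroup.normalizer (L : Set G) = L := by
      rcases lt_or_eq_of_le (Subgroup.le_normalizer (H := L)) with h | h
      · exact absurd (Subgroup.normalizer_eq_top_iff.mp (hL.2 _ h)) hLn
      · exact h.symm
    exact hZL (hNL ▸ hZnormalizer)
  · -- main branch
    have hSLtop : Ssub hMn L k ⊔ L = ⊤ :=
      hL.2 _ (lt_of_le_of_ne le_sup_right fun h => hSL (le_sup_left.trans h.symm.le))
    haveI : (Ssub hMn L k).Normal := ⟨fun s hs g => hSnorm g s hs⟩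
    have hk' : k ∈ ((Ssub hMn L k : Set G) * (L : Set G)) := by
      rw [← Subgroup.normal_mul, hSLtop]; simp
    obtain ⟨s, hs, l, hl, heq0⟩ := hk'
    have heq : s * l = k := heq0
    have hsZ : s ∈ centerOf M := hSZ s hs
    -- conjugation by k equals conjugation by l on Z(M)
    have e1 : ∀ z' ∈ centerOf M, k * z' * k⁻¹ = l * z' * l⁻¹ := by
      intro z' hz'
      have hlz : l * z' * l⁻¹ ∈ centerOf M := hZN.conj_mem z' hz' l
      calc k * z' * k⁻¹ = s * (l * z' * l⁻¹) * s⁻¹ := by rw [← heq]; group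
        _ = (l * z' * l⁻¹) * s * s⁻¹ := by rw [centerOf_comm hsZ hlz]
        _ = l * z' * l⁻¹ := by group
    obtain ⟨z, hz, n, hn, rfl⟩ := mem_Ssub.mp hs
    have hlzZ : l * z⁻¹ * l⁻¹ ∈ centerOf M := hZN.conj_mem z⁻¹ (inv_mem hz) l
    have hnZ : n ∈ centerOf M := (Subgroup.mem_inf.mp hn).1
    have e1inv : k * z⁻¹ * k⁻¹ = l * z⁻¹ * l⁻¹ := e1 z⁻¹ (inv_mem hz)
    have hfinal : z * (n * l) * z⁻¹ = k := by
      calc z * (n * l) * z⁻¹ = z * (n * (l * z⁻¹ * l⁻¹)) * l := by group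
        _ = z * ((l * z⁻¹ * l⁻¹) * n) * l := by rw [centerOf_comm hnZ hlzZ]
        _ = z * (l * z⁻¹ * l⁻¹) * n * l := by group
        _ = z * (k * z⁻¹ * k⁻¹) * n * l := by rw [← e1inv]
        _ = k := heq
    refine ⟨z, ?_⟩
    refine Subgroup.mem_map.mpr ⟨n * l, mul_mem (Subgroup.mem_inf.mp hn).2 hl, ?_⟩
    simpa using hfinal

end NC
end

section
/- Let G be a group containing a normal subgroup N such that G/N is not cyclic and N is not contained in Z(G), and set C := C_G(N). Suppose that G/C is not cyclic. Then the non-commuting, non-generating graph nc(G) is connected with diameter 2 or 3. Moreover, if d(x,y) = 3 for vertices x, y of nc(G), then one of x, y lies in C, the other lies in G \ (N ∪ C), and [x,y] = 1. In particular, if C = Z(G), then nc(G) has diameter 2. -/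
open Subgroup

namespace NC

variable {G : Type*} [Group G]

/-! ### Auxiliary lemmas -/

lemma aux_centralizer_normal (N : Subgroup G) [hN : N.Normal] :
    (Subgroup.centralizer (N : Set G)).Normal := by
  constructor
  intro c hc g
  rw [Subgroup.mem_centralizer_iff] at hc ⊢
  intro h hh
  have hh' : g⁻¹ * h * g ∈ N := by
    simpa [mul_assoc] using hN.conj_mem h hh g⁻¹
  have heq : (g⁻¹ * h * g) * c = c * (g⁻¹ * h * g) := hc _ hh'
  calc h * (g * c * g⁻¹) = g * ((g⁻¹ * h * g) * c) * g⁻¹ := by group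
    _ = g * (c * (g⁻¹ * h * g)) * g⁻¹ := by rw [heq]
    _ = (g * c * g⁻¹) * h := by group

lemma aux_supN_ne_top {N : Subgroup G} [N.Normal] (hNq : ¬ IsCyclic (G ⧸ N)) (a : G) :
    Subgroup.closure {a} ⊔ N ≠ ⊤ := by
  intro htop
  apply hNq
  refine ⟨⟨QuotientGroup.mk a, fun x => ?_⟩⟩
  obtain ⟨b, rfl⟩ := QuotientGroup.mk_surjective x
  have hb : b ∈ ((Subgroup.closure {a} ⊔ N : Subgroup G) : Set G) := by
    rw [htop]; trivial
  rw [Subgroup.mul_normal] at hb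
  obtain ⟨c, hc, n, hn, rfl⟩ := hb
  obtain ⟨k, rfl⟩ := Subgroup.mem_closure_singleton.mp hc
  refine Subgroup.mem_zpowers_iff.mpr ⟨k, ?_⟩
  have h1 : (QuotientGroup.mk (a ^ k * n) : G ⧸ N) = QuotientGroup.mk (a ^ k) := by
    apply (QuotientGroup.eq (s := N)).mpr
    simpa [mul_assoc] using N.inv_mem hn
  rw [h1, QuotientGroup.mk_zpow]

lemma aux_supC_ne_top {N : Subgroup G} [N.Normal]
    (hCq : ¬ QuotCyclic (Subgroup.centralizer (N : Set G))) (a : G) :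
    Subgroup.closure {a} ⊔ Subgroup.centralizer (N : Set G) ≠ ⊤ := by
  intro htop
  apply hCq
  haveI := aux_centralizer_normal N
  refine ⟨a, fun x => ?_⟩
  have hb : x ∈ ((Subgroup.closure {a} ⊔ Subgroup.centralizer (N : Set G) : Subgroup G) :
      Set G) := by rw [htop]; trivial
  rw [Subgroup.mul_normal] at hb
  obtain ⟨c, hc, n, hn, rfl⟩ := hb
  obtain ⟨k, rfl⟩ := Subgroup.mem_closure_singleton.mp hc
  refine ⟨k, ?_⟩
  have : (a ^ k * n)⁻¹ * a ^ k = n⁻¹ := by group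
  rw [this]
  exact inv_mem hn

/-- Edge via an element of `N`. -/
lemma aux_adjN {N : Subgroup G} [N.Normal] (hNq : ¬ IsCyclic (G ⧸ N)) {a n : G}
    (hn : n ∈ N) (hc : a * n ≠ n * a) : (ncGraph G).Adj a n := by
  refine ⟨hc, fun htop => aux_supN_ne_top hNq a ?_⟩
  have hle : Subgroup.closure {a, n} ≤ Subgroup.closure {a} ⊔ N := by
    apply Subgroup.closure_le _ |>.mpr
    rintro x (rfl | rfl)
    · exact Subgroup.mem_sup_left (Subgroup.subset_closure rfl)
    · exact Subgroup.mem_sup_right hn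
  rw [htop] at hle
  exact top_le_iff.mp hle

/-- Edge via an element of `C`. -/
lemma aux_adjC {N : Subgroup G} [N.Normal]
    (hCq : ¬ QuotCyclic (Subgroup.centralizer (N : Set G))) {x y : G}
    (hx : x ∈ Subgroup.centralizer (N : Set G)) (hc : x * y ≠ y * x) :
    (ncGraph G).Adj x y := by
  refine ⟨hc, fun htop => aux_supC_ne_top hCq y ?_⟩
  have hle : Subgroup.closure {x, y} ≤
      Subgroup.closure {y} ⊔ Subgroup.centralizer (N : Set G) := by
    apply Subgroup.closure_le _ |>.mpr
    rintro z (rfl | rfl)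
    · exact Subgroup.mem_sup_right hx
    · exact Subgroup.mem_sup_left (Subgroup.subset_closure rfl)
  rw [htop] at hle
  exact top_le_iff.mp hle

/-- Given non-commuting partners `n` for `x` and `m` for `y`, one of `n`, `m`, `n*m`
fails to commute with both `x` and `y`. -/
lemma aux_mid {x y n m : G} (hxn : x * n ≠ n * x) (hym : y * m ≠ m * y) :
    ∃ w, (w = n ∨ w = m ∨ w = n * m) ∧ x * w ≠ w * x ∧ y * w ≠ w * y := by
  by_cases h1 : y * n = n * y
  · by_cases h2 : x * m = m * x
    · refine ⟨n * m, Or.inr (Or.inr rfl), ?_, ?_⟩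
      · intro h
        apply hxn
        have h' : (x * n) * m = (n * x) * m := by
          calc (x * n) * m = x * (n * m) := by rw [mul_assoc]
            _ = (n * m) * x := h
            _ = n * (m * x) := by rw [mul_assoc]
            _ = n * (x * m) := by rw [h2]
            _ = (n * x) * m := by rw [mul_assoc]
        exact mul_right_cancel h'
      · intro h
        apply hym
        have h' : n * (y * m) = n * (m * y) := by
          calc n * (y * m) = (n * y) * m := by rw [mul_assoc]
            _ = (y * n) * m := by rw [h1]
            _ = y * (n * m) := by rw [mul_assoc]
            _ = (n * m) * y := h
            _ = n * (m * y) := by rw [mul_assoc]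
        exact mul_left_cancel h'
    · exact ⟨m, Or.inr (Or.inl rfl), h2, hym⟩
  · exact ⟨n, Or.inl rfl, hxn, h1⟩

lemma aux_exists_N {N : Subgroup G} {x : G}
    (hx : x ∉ Subgroup.centralizer (N : Set G)) : ∃ n ∈ N, x * n ≠ n * x := by
  rw [Subgroup.mem_centralizer_iff] at hx
  push_neg at hx
  obtain ⟨n, hn, h⟩ := hx
  exact ⟨n, hn, fun e => h e.symm⟩

lemma aux_exists_nc {x : G} (hx : x ∉ Subgroup.center G) : ∃ a : G, x * a ≠ a * x := by
  rw [Subgroup.mem_center_iff] at hx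
  push_neg at hx
  obtain ⟨a, ha⟩ := hx
  exact ⟨a, fun e => ha e.symm⟩

/-- Common neighbour for two vertices outside `C`. -/
lemma aux_cn_out {N : Subgroup G} [N.Normal] (hNq : ¬ IsCyclic (G ⧸ N)) {x y : G}
    (hx : x ∉ Subgroup.centralizer (N : Set G)) (hy : y ∉ Subgroup.centralizer (N : Set G)) :
    ∃ w, (ncGraph G).Adj x w ∧ (ncGraph G).Adj w y := by
  obtain ⟨n, hnN, hxn⟩ := aux_exists_N hx
  obtain ⟨m, hmN, hym⟩ := aux_exists_N hy
  obtain ⟨w, hw, hxw, hyw⟩ := aux_mid hxn hym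
  have hwN : w ∈ N := by
    rcases hw with rfl | rfl | rfl
    · exact hnN
    · exact hmN
    · exact N.mul_mem hnN hmN
  exact ⟨w, aux_adjN hNq hwN hxw, (aux_adjN hNq hwN hyw).symm⟩

/-- Common neighbour when `x ∈ C` (noncentral) and `y` is noncentral with `y ∈ C` or `y ∈ N`. -/
lemma aux_cn_C {N : Subgroup G} [N.Normal] (hNq : ¬ IsCyclic (G ⧸ N))
    (hCq : ¬ QuotCyclic (Subgroup.centralizer (N : Set G))) {x y : G}
    (hxC : x ∈ Subgroup.centralizer (N : Set G)) (hxZ : x ∉ Subgroup.center G)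
    (hyZ : y ∉ Subgroup.center G)
    (hy : y ∈ Subgroup.centralizer (N : Set G) ∨ y ∈ N) :
    ∃ w, (ncGraph G).Adj x w ∧ (ncGraph G).Adj w y := by
  obtain ⟨a, hxa⟩ := aux_exists_nc hxZ
  obtain ⟨b, hyb⟩ := aux_exists_nc hyZ
  obtain ⟨w, _, hxw, hyw⟩ := aux_mid hxa hyb
  refine ⟨w, aux_adjC hCq hxC hxw, ?_⟩
  rcases hy with hyC | hyN
  · exact (aux_adjC hCq hyC hyw).symm
  · exact aux_adjN hNq hyN (fun e => hyw e.symm)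

lemma aux_dist_le_two {x y w : G} (h1 : (ncGraph G).Adj x w) (h2 : (ncGraph G).Adj w y) :
    (ncGraph G).dist x y ≤ 2 := by
  simpa using SimpleGraph.dist_le
    (SimpleGraph.Walk.cons h1 (SimpleGraph.Walk.cons h2 SimpleGraph.Walk.nil))

/-- A pair of distinct commuting noncentral elements exists. -/
lemma aux_pair {N : Subgroup G} (hNZ : ¬ N ≤ Subgroup.center G) :
    ∃ x y : G, x ∉ Subgroup.center G ∧ y ∉ Subgroup.center G ∧ x ≠ y ∧ x * y = y * x := by
  obtain ⟨n, hnN, hnZ⟩ := SetLike.not_le_iff_exists.mp hNZ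
  by_cases hz : ∃ z ∈ Subgroup.center G, z ≠ (1 : G)
  · obtain ⟨z, hzZ, hz1⟩ := hz
    refine ⟨n, n * z, hnZ, ?_, ?_, ?_⟩
    · intro h
      exact hnZ (by simpa using (Subgroup.center G).mul_mem h ((Subgroup.center G).inv_mem hzZ))
    · intro h
      apply hz1
      have : n * 1 = n * z := by simpa using h
      exact (mul_left_cancel this).symm
    · have hc : n * z = z * n := (Subgroup.mem_center_iff.mp hzZ) n
      calc n * (n * z) = n * (z * n) := by rw [hc]
        _ = (n * z) * n := by rw [mul_assoc]
  · push_neg at hz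
    have hn1 : n ≠ 1 := fun h => hnZ (h ▸ (Subgroup.center G).one_mem)
    by_cases h2 : n * n = 1
    · obtain ⟨g, hg⟩ := aux_exists_nc hnZ
      have hninv : n⁻¹ = n := inv_eq_of_mul_eq_one_left h2
      set h := g * n * g⁻¹ with hdef
      have hh1 : h ≠ 1 := by
        intro e
        apply hn1
        have h3 : n = g⁻¹ * h * g := by rw [hdef]; group
        rw [e] at h3
        simpa using h3
      have hhn : h ≠ n := by
        intro e
        apply hg
        calc n * g = h * g := by rw [e]
          _ = g * n := by rw [hdef]; group
      have hsq : h * h = 1 := by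
        have h4 : h * h = g * (n * n) * g⁻¹ := by rw [hdef]; group
        rw [h4, h2]; group
      have hhinv : h⁻¹ = h := inv_eq_of_mul_eq_one_left hsq
      by_cases hc : n * h = h * n
      · exact ⟨n, h, hnZ, fun e => hh1 (hz _ e), hhn.symm, hc⟩
      · refine ⟨n * h, h * n, ?_, ?_, hc, ?_⟩
        · intro e
          have e1 : n * h = 1 := hz _ e
          exact hhn ((eq_inv_of_mul_eq_one_right e1).trans hninv)
        · intro e
          have e1 : h * n = 1 := hz _ e
          exact hhn ((eq_inv_of_mul_eq_one_left e1).trans hninv)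
        · calc (n * h) * (h * n) = n * (h * h) * n := by group
            _ = n * n := by rw [hsq]; group
            _ = 1 := h2
            _ = h * h := hsq.symm
            _ = h * (n * n) * h := by rw [h2]; group
            _ = (h * n) * (n * h) := by group
    · refine ⟨n, n * n, hnZ, ?_, ?_, by rw [mul_assoc]⟩
      · exact fun e => h2 (hz _ e)
      · intro e
        apply hn1
        have : n * 1 = n * n := by simpa using e
        exact (mul_left_cancel this).symm

/-- Lemma 5.3 / `lem:gcnoncyc`. -/
theorem statement_18 {N : Subgroup G} [hN : N.Normal]
    (hNq : ¬ IsCyclic (G ⧸ N)) (hNZ : ¬ N ≤ Subgroup.center G)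
    (hCq : ¬ QuotCyclic (Subgroup.centralizer (N : Set G))) :
    (∀ x y : G, x ∉ Subgroup.center G → y ∉ Subgroup.center G →
        (ncGraph G).Reachable x y ∧ (ncGraph G).dist x y ≤ 3) ∧
      (∃ x y : G, x ∉ Subgroup.center G ∧ y ∉ Subgroup.center G ∧
        2 ≤ (ncGraph G).dist x y) ∧
      (∀ x y : G, x ∉ Subgroup.center G → y ∉ Subgroup.center G →
        (ncGraph G).dist x y = 3 →
        x * y = y * x ∧
          ((x ∈ Subgroup.centralizer (N : Set G) ∧ y ∉ N ∧
              y ∉ Subgroup.centralizer (N : Set G)) ∨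
            (y ∈ Subgroup.centralizer (N : Set G) ∧ x ∉ N ∧
              x ∉ Subgroup.centralizer (N : Set G)))) ∧
      (Subgroup.centralizer (N : Set G) = Subgroup.center G →
        ∀ x y : G, x ∉ Subgroup.center G → y ∉ Subgroup.center G →
          (ncGraph G).dist x y ≤ 2) := by
  -- Distance ≤ 2 for two vertices outside C
  have two_out : ∀ x y : G, x ∉ Subgroup.centralizer (N : Set G) →
      y ∉ Subgroup.centralizer (N : Set G) →
      (ncGraph G).Reachable x y ∧ (ncGraph G).dist x y ≤ 2 := by
    intro x y hx hy
    obtain ⟨w, h1, h2⟩ := aux_cn_out hNq hx hy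
    exact ⟨⟨SimpleGraph.Walk.cons h1 (SimpleGraph.Walk.cons h2 SimpleGraph.Walk.nil)⟩,
      aux_dist_le_two h1 h2⟩
  -- Distance ≤ 2 when x ∈ C and y ∈ C or y ∈ N
  have two_C : ∀ x y : G, x ∈ Subgroup.centralizer (N : Set G) →
      x ∉ Subgroup.center G → y ∉ Subgroup.center G →
      (y ∈ Subgroup.centralizer (N : Set G) ∨ y ∈ N) →
      (ncGraph G).Reachable x y ∧ (ncGraph G).dist x y ≤ 2 := by
    intro x y hxC hx hy hyCN
    obtain ⟨w, h1, h2⟩ := aux_cn_C hNq hCq hxC hx hy hyCN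
    exact ⟨⟨SimpleGraph.Walk.cons h1 (SimpleGraph.Walk.cons h2 SimpleGraph.Walk.nil)⟩,
      aux_dist_le_two h1 h2⟩
  -- Distance ≤ 3 when x ∈ C
  have key3 : ∀ x y : G, x ∈ Subgroup.centralizer (N : Set G) →
      x ∉ Subgroup.center G → y ∉ Subgroup.center G →
      (ncGraph G).Reachable x y ∧ (ncGraph G).dist x y ≤ 3 := by
    intro x y hxC hx hy
    by_cases hyC : y ∈ Subgroup.centralizer (N : Set G)
    · obtain ⟨hr, hd⟩ := two_C x y hxC hx hy (Or.inl hyC)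
      exact ⟨hr, hd.trans (by norm_num)⟩
    by_cases hcomm : x * y = y * x
    · obtain ⟨n, hnN, hyn⟩ := aux_exists_N hyC
      have hnZ : n ∉ Subgroup.center G := by
        intro h
        exact hyn (Subgroup.mem_center_iff.mp h y)
      obtain ⟨w, h1, h2⟩ := aux_cn_C hNq hCq hxC hx hnZ (Or.inr hnN)
      have h3 : (ncGraph G).Adj n y := (aux_adjN hNq hnN hyn).symm
      refine ⟨⟨SimpleGraph.Walk.cons h1 (SimpleGraph.Walk.cons h2
        (SimpleGraph.Walk.cons h3 SimpleGraph.Walk.nil))⟩, ?_⟩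
      simpa using SimpleGraph.dist_le (SimpleGraph.Walk.cons h1 (SimpleGraph.Walk.cons h2
        (SimpleGraph.Walk.cons h3 SimpleGraph.Walk.nil)))
    · have hadj : (ncGraph G).Adj x y := aux_adjC hCq hxC hcomm
      refine ⟨⟨SimpleGraph.Walk.cons hadj SimpleGraph.Walk.nil⟩, ?_⟩
      have := SimpleGraph.dist_le (SimpleGraph.Walk.cons hadj SimpleGraph.Walk.nil)
      simp only [SimpleGraph.Walk.length_cons, SimpleGraph.Walk.length_nil] at this
      omega
  have part1 : ∀ x y : G, x ∉ Subgroup.center G → y ∉ Subgroup.center G →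
      (ncGraph G).Reachable x y ∧ (ncGraph G).dist x y ≤ 3 := by
    intro x y hx hy
    by_cases hxC : x ∈ Subgroup.centralizer (N : Set G)
    · exact key3 x y hxC hx hy
    by_cases hyC : y ∈ Subgroup.centralizer (N : Set G)
    · obtain ⟨hr, hd⟩ := key3 y x hyC hy hx
      exact ⟨hr.symm, by rwa [SimpleGraph.dist_comm]⟩
    · obtain ⟨hr, hd⟩ := two_out x y hxC hyC
      exact ⟨hr, hd.trans (by norm_num)⟩
  refine ⟨part1, ?_, ?_, ?_⟩
  · -- existence of a pair at distance ≥ 2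
    obtain ⟨x, y, hx, hy, hne, hcomm⟩ := aux_pair hNZ
    refine ⟨x, y, hx, hy, ?_⟩
    have hr := (part1 x y hx hy).1
    have h0 : (ncGraph G).dist x y ≠ 0 := fun h => hne (hr.dist_eq_zero_iff.mp h)
    have h1 : (ncGraph G).dist x y ≠ 1 := fun h =>
      (SimpleGraph.dist_eq_one_iff_adj.mp h).1 hcomm
    omega
  · -- the distance-3 characterisation
    intro x y hx hy h3
    by_cases hxC : x ∈ Subgroup.centralizer (N : Set G)
    · by_cases hyC : y ∈ Subgroup.centralizer (N : Set G)
      · have := (two_C x y hxC hx hy (Or.inl hyC)).2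
        omega
      have hcomm : x * y = y * x := by
        by_contra hcomm
        have := SimpleGraph.dist_eq_one_iff_adj.mpr (aux_adjC hCq hxC hcomm)
        omega
      have hyN : y ∉ N := by
        intro hyN
        have := (two_C x y hxC hx hy (Or.inr hyN)).2
        omega
      exact ⟨hcomm, Or.inl ⟨hxC, hyN, hyC⟩⟩
    · by_cases hyC : y ∈ Subgroup.centralizer (N : Set G)
      · have h3' : (ncGraph G).dist y x = 3 := by rwa [SimpleGraph.dist_comm]
        have hcomm : y * x = x * y := by
          by_contra hcomm
          have := SimpleGraph.dist_eq_one_iff_adj.mpr (aux_adjC hCq hyC hcomm)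
          omega
        have hxN : x ∉ N := by
          intro hxN
          have := (two_C y x hyC hy hx (Or.inr hxN)).2
          omega
        exact ⟨hcomm.symm, Or.inr ⟨hyC, hxN, hxC⟩⟩
      · have := (two_out x y hxC hyC).2
        omega
  · -- C = Z(G) implies diameter ≤ 2
    intro hCZ x y hx hy
    exact (two_out x y (fun h => hx (hCZ ▸ h)) (fun h => hy (hCZ ▸ h))).2

end NC
end

section
/- Let G be a group containing a normal subgroup N such that G/N is not cyclic and N is not contained in Z(G), set C := C_G(N), and suppose that G/C is cyclic. Then for every subgroup H of G with C properly contained in H, the subgroup H is non-abelian, Z(H) is properly contained in Z(C), and H is normal in G. In particular, Z(G) is properly contained in Z(C). -/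
open Subgroup

namespace NC

variable {G : Type*} [Group G]

/-- Lemma 5.5 / `lem:ninzc`. -/
theorem statement_19 {N : Subgroup G} [hN : N.Normal]
    (hNq : ¬ IsCyclic (G ⧸ N)) (hNZ : ¬ N ≤ Subgroup.center G)
    (hCq : QuotCyclic (Subgroup.centralizer (N : Set G))) :
    (∀ H : Subgroup G, Subgroup.centralizer (N : Set G) < H →
        (∃ a ∈ H, ∃ b ∈ H, a * b ≠ b * a) ∧
          centerOf H < centerOf (Subgroup.centralizer (N : Set G)) ∧ H.Normal) ∧
      Subgroup.center G < centerOf (Subgroup.centralizer (N : Set G)) := by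
  set C := Subgroup.centralizer (N : Set G) with hCdef
  haveI hCnormal : C.Normal := by
    constructor
    intro c hc g
    rw [hCdef, Subgroup.mem_centralizer_iff]
    intro n hn
    have hn' : g⁻¹ * n * g ∈ N := by
      have := hN.conj_mem n hn g⁻¹
      simpa using this
    have hcomm := Subgroup.mem_centralizer_iff.mp hc _ hn'
    -- hcomm : (g⁻¹ * n * g) * c = c * (g⁻¹ * n * g)
    have : n * (g * c * g⁻¹) = g * ((g⁻¹ * n * g) * c) * g⁻¹ := by group
    rw [this, hcomm]; group
  obtain ⟨g, hg⟩ := hCq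
  have hcyc : IsCyclic (G ⧸ C) := by
    refine ⟨⟨QuotientGroup.mk g, fun x => ?_⟩⟩
    obtain ⟨x, rfl⟩ := QuotientGroup.mk_surjective x
    obtain ⟨n, hn⟩ := hg x
    refine ⟨n, ?_⟩
    show (QuotientGroup.mk g : G ⧸ C) ^ n = QuotientGroup.mk x
    rw [← QuotientGroup.mk_zpow]
    exact (QuotientGroup.eq.mpr hn).symm
  -- N is abelian
  have hNab : ∀ a ∈ N, ∀ b ∈ N, a * b = b * a := by
    let f : N →* G ⧸ C := (QuotientGroup.mk' C).comp N.subtype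
    have hker : f.ker ≤ Subgroup.center N := by
      intro n hn
      rw [MonoidHom.mem_ker] at hn
      have hnC : (n : G) ∈ C := (QuotientGroup.eq_one_iff _).mp hn
      rw [Subgroup.mem_center_iff]
      intro m
      ext
      exact Subgroup.mem_centralizer_iff.mp hnC m m.2
    haveI := hcyc
    letI : CommGroup N := commGroupOfCyclicCenterQuotient f hker
    intro a ha b hb
    have := mul_comm (⟨a, ha⟩ : N) (⟨b, hb⟩ : N)
    exact congrArg Subtype.val this
  have hNC : N ≤ C := fun n hn =>
    Subgroup.mem_centralizer_iff.mpr fun m hm => hNab m hm n hn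
  have hNZC : N ≤ centerOf C := by
    intro n hn
    refine Subgroup.mem_inf.mpr ⟨hNC hn, Subgroup.mem_centralizer_iff.mpr fun c hc => ?_⟩
    exact (Subgroup.mem_centralizer_iff.mp hc n hn).symm
  -- commutativity of G ⧸ C
  have hqcomm : ∀ a b : G ⧸ C, a * b = b * a := by
    obtain ⟨q, hq⟩ := hcyc
    intro a b
    obtain ⟨m, hm⟩ := hq a
    obtain ⟨k, hk⟩ := hq b
    rw [← hm, ← hk, ← zpow_add, ← zpow_add, add_comm]
  constructor
  · intro H hH
    have hCH : C ≤ H := hH.le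
    refine ⟨?_, ?_, ?_⟩
    · by_contra h'
      push_neg at h'
      refine hH.not_ge fun h hh => ?_
      exact Subgroup.mem_centralizer_iff.mpr fun m hm => h' m (hCH (hNC hm)) h hh
    · rw [SetLike.lt_iff_le_and_exists]
      constructor
      · intro z hz
        obtain ⟨hzH, hzc⟩ := Subgroup.mem_inf.mp hz
        refine Subgroup.mem_inf.mpr ⟨?_, ?_⟩
        · exact Subgroup.mem_centralizer_iff.mpr fun m hm =>
            Subgroup.mem_centralizer_iff.mp hzc m (hCH (hNC hm))
        · exact Subgroup.mem_centralizer_iff.mpr fun c hc =>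
            Subgroup.mem_centralizer_iff.mp hzc c (hCH hc)
      · obtain ⟨h, hhH, hhC⟩ := SetLike.exists_of_lt hH
        rw [hCdef, Subgroup.mem_centralizer_iff] at hhC
        push_neg at hhC
        obtain ⟨m, hm, hmh⟩ := hhC
        refine ⟨m, hNZC hm, fun hmem => ?_⟩
        obtain ⟨-, hmz⟩ := Subgroup.mem_inf.mp hmem
        exact hmh (Subgroup.mem_centralizer_iff.mp hmz h hhH).symm
    · have hmapn : (Subgroup.map (QuotientGroup.mk' C) H).Normal := by
        constructor
        intro x hx q
        have : q * x * q⁻¹ = x := by rw [hqcomm q x, mul_assoc, mul_inv_cancel, mul_one]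
        rwa [this]
      have hmap : Subgroup.comap (QuotientGroup.mk' C) (Subgroup.map (QuotientGroup.mk' C) H) = H := by
        rw [Subgroup.comap_map_eq, QuotientGroup.ker_mk']
        exact sup_eq_left.mpr hCH
      rw [← hmap]
      exact Subgroup.Normal.comap hmapn _
  · rw [SetLike.lt_iff_le_and_exists]
    constructor
    · intro z hz
      rw [Subgroup.mem_center_iff] at hz
      refine Subgroup.mem_inf.mpr ⟨?_, ?_⟩
      · exact Subgroup.mem_centralizer_iff.mpr fun m _ => hz m
      · exact Subgroup.mem_centralizer_iff.mpr fun c _ => hz c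
    · obtain ⟨n, hn, hnz⟩ := SetLike.not_le_iff_exists.mp hNZ
      exact ⟨n, hNZC hn, hnz⟩

end NC
end
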